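/- arXiv:2107.12267 — 5 statements merged into one kernel-verified Lean document; each statement's English description precedes it below -/
import Mathlib

section
/- Let D be a directed tree (an orientation of a tree), S, T ⊆ V(D) configurations with |S| = |T| such that every leaf of the underlying tree is in the symmetric difference S Δ T, and suppose there is a bijection μ : S → T such that for every s ∈ S, s ≠ μ(s) and there is a directed path from s to μ(s) in D. Then there exists a transforming sequence from S to T in D. -/
def doMove {V : Type*} [DecidableEq V] (C : Finset V) (m : V × V) : Finset V :=
  insert m.2 (C.erase m.1)

/-- A free path for the move from `s` to `t`: a path whose intermediate vertices
(the list `p`) avoid the tokens of the configuration `C`. -/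
def FreePath {V : Type*} (A : V → V → Prop) (C : Finset V) (s t : V) : Prop :=
  ∃ p : List V, List.Chain A s (p ++ [t]) ∧ ∀ v ∈ p, v ∉ C

def ValidMove {V : Type*} (A : V → V → Prop) (C : Finset V) (m : V × V) : Prop :=
  m.1 ∈ C ∧ m.2 ∉ C ∧ FreePath A C m.1 m.2

/-- `Transforms A S ms T`: the sequence of moves `ms`, each valid after its
predecessors, transforms the configuration `S` into the configuration `T`. -/
inductive Transforms {V : Type*} [DecidableEq V] (A : V → V → Prop) :
    Finset V → List (V × V) → Finset V → Prop
  | nil (C : Finset V) : Transforms A C [] C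
  | cons {C T : Finset V} {m : V × V} {ms : List (V × V)} :
      ValidMove A C m → Transforms A (doMove C m) ms T → Transforms A C (m :: ms) T

open SimpleGraph

section Aux
set_option linter.unusedSectionVars false
variable {V : Type*} [Fintype V] [DecidableEq V] {G : SimpleGraph V} {A : V → V → Prop}

lemma exists_dirPath (horient : ∀ a b, A a b → G.Adj a b) {x t : V}
    (h : Relation.ReflTransGen A x t) :
    ∃ p : G.Walk x t, p.IsPath ∧ ∀ d ∈ p.darts, A d.toProd.1 d.toProd.2 := by
  induction h using Relation.ReflTransGen.head_induction_on with
  | refl => exact ⟨Walk.nil, Walk.IsPath.nil, by simp⟩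
  | @head a c hab hbt ih =>
    obtain ⟨p, hp, hd⟩ := ih
    by_cases hmem : a ∈ p.support
    · exact ⟨p.dropUntil _ hmem, hp.dropUntil hmem,
        fun d hd' => hd d (p.darts_dropUntil_subset hmem hd')⟩
    · refine ⟨Walk.cons (horient _ _ hab) p, hp.cons hmem, ?_⟩
      intro d hd'
      rw [Walk.darts_cons, List.mem_cons] at hd'
      rcases hd' with h | h
      · subst h; exact hab
      · exact hd d h

lemma dirWalk_rtg {a b : V} (p : G.Walk a b)
    (hd : ∀ d ∈ p.darts, A d.toProd.1 d.toProd.2) : Relation.ReflTransGen A a b := by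
  induction p with
  | nil => exact .refl
  | cons h q ih =>
    exact Relation.ReflTransGen.head
      (hd ⟨(_, _), h⟩ (by rw [Walk.darts_cons]; exact List.mem_cons_self))
      (ih fun d h' => hd d (by rw [Walk.darts_cons]; exact List.mem_cons_of_mem _ h'))

lemma no_cycle (hG : G.IsTree) (horient : ∀ a b, A a b → G.Adj a b)
    (hcover : ∀ a b, G.Adj a b → (A a b ∨ A b a) ∧ ¬ (A a b ∧ A b a)) (x : V) :
    ¬ Relation.TransGen A x x := by
  intro h
  obtain ⟨y, hxy, hyx⟩ := Relation.TransGen.head'_iff.mp h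
  have hadj := horient _ _ hxy
  have hyne : y ≠ x := fun he => G.irrefl (he ▸ hadj)
  obtain ⟨p, hp, hd⟩ := exists_dirPath horient hyx
  have hq : (Walk.cons hadj.symm Walk.nil : G.Walk y x).IsPath := by
    refine Walk.IsPath.nil.cons ?_
    simpa using hyne
  obtain ⟨q, hq', huq⟩ := hG.existsUnique_path y x
  have hpe : p = Walk.cons hadj.symm Walk.nil := (huq _ hp).trans (huq _ hq).symm
  rw [hpe] at hd
  have : A y x := by
    have := hd ⟨(y, x), hadj.symm⟩ ?_
    · exact this
    · simp [Walk.darts_cons]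
  exact (hcover x y hadj).2 ⟨hxy, this⟩

lemma path_length_eq_dist (hG : G.IsTree) {a b : V} (p : G.Walk a b) (hp : p.IsPath) :
    p.length = G.dist a b := by
  obtain ⟨w, hw⟩ := hG.isConnected.exists_walk_length_eq_dist a b
  obtain ⟨q, _, huq⟩ := hG.existsUnique_path a b
  have h1 : p = q := huq _ hp
  have h2 : w.bypass = q := huq _ w.bypass_isPath
  refine le_antisymm ?_ (SimpleGraph.dist_le p)
  calc p.length = w.bypass.length := by rw [h1, h2]
    _ ≤ w.length := w.length_bypass_le
    _ = G.dist a b := hw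

lemma dist_lt (hG : G.IsTree) (horient : ∀ a b, A a b → G.Adj a b)
    (hcover : ∀ a b, G.Adj a b → (A a b ∨ A b a) ∧ ¬ (A a b ∧ A b a))
    {s x t : V} (hA : A s x) (hR : Relation.ReflTransGen A x t) :
    G.dist x t < G.dist s t := by
  obtain ⟨p, hp, hd⟩ := exists_dirPath horient hR
  have hs : s ∉ p.support := by
    intro hmem
    have hrt : Relation.ReflTransGen A x s :=
      dirWalk_rtg (p.takeUntil s hmem) (fun d h => hd d (p.darts_takeUntil_subset hmem h))
    exact no_cycle hG horient hcover s (Relation.TransGen.head' hA hrt)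
  have hq : (Walk.cons (horient _ _ hA) p).IsPath := hp.cons hs
  have hlen := path_length_eq_dist hG _ hq
  rw [Walk.length_cons] at hlen
  calc G.dist x t ≤ p.length := SimpleGraph.dist_le p
    _ < p.length + 1 := Nat.lt_succ_self _
    _ = G.dist s t := hlen

lemma inner_move (hG : G.IsTree) (horient : ∀ a b, A a b → G.Adj a b)
    (hcover : ∀ a b, G.Adj a b → (A a b ∨ A b a) ∧ ¬ (A a b ∧ A b a))
    (C T : Finset V) (s : V) :
    ∀ μ : V → V, Set.BijOn μ ↑C ↑T →
      (∀ v ∈ C, Relation.ReflTransGen A v (μ v)) → s ∈ C → μ s ≠ s →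
      ∃ (m : V × V) (μ' : V → V), ValidMove A C m ∧ Set.BijOn μ' ↑(doMove C m) ↑T ∧
        (∀ v ∈ doMove C m, Relation.ReflTransGen A v (μ' v)) ∧
        ∑ v ∈ doMove C m, G.dist v (μ' v) < ∑ v ∈ C, G.dist v (μ v) := by
  have hwf : WellFounded (Function.swap A) := by
    letI h1 : IsTrans V (Relation.TransGen (Function.swap A)) :=
      ⟨fun _ _ _ => Relation.TransGen.trans⟩
    letI h2 : IsIrrefl V (Relation.TransGen (Function.swap A)) :=
      ⟨fun a h => no_cycle hG horient hcover a (Relation.transGen_swap.mp h)⟩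
    exact Subrelation.wf (fun {a b} h => Relation.TransGen.single h)
      (Finite.wellFounded_of_trans_of_irrefl (Relation.TransGen (Function.swap A)))
  refine hwf.induction
    (C := fun s => ∀ μ : V → V, Set.BijOn μ ↑C ↑T →
      (∀ v ∈ C, Relation.ReflTransGen A v (μ v)) → s ∈ C → μ s ≠ s →
      ∃ (m : V × V) (μ' : V → V), ValidMove A C m ∧ Set.BijOn μ' ↑(doMove C m) ↑T ∧
        (∀ v ∈ doMove C m, Relation.ReflTransGen A v (μ' v)) ∧
        ∑ v ∈ doMove C m, G.dist v (μ' v) < ∑ v ∈ C, G.dist v (μ v)) s ?_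
  clear s
  intro x ih μ hbij hpath hxC hne
  rcases (hpath x hxC).cases_head with heq | ⟨y, hxy, hyt⟩
  · exact absurd heq.symm hne
  by_cases hyC : y ∈ C
  · -- blocked: the next vertex is occupied
    have hxney : x ≠ y := (horient _ _ hxy).ne
    by_cases hfix : μ y = y
    · -- swap targets of x and y, then recurse at y
      set μ₂ : V → V := fun v => if v = x then y else if v = y then μ x else μ v with hμ₂def
      have hμ₂x : μ₂ x = y := by simp [hμ₂def]
      have hμ₂y : μ₂ y = μ x := by simp [hμ₂def, hxney.symm]
      have hμ₂v : ∀ v, v ≠ x → v ≠ y → μ₂ v = μ v := by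
        intro v h1 h2; simp [hμ₂def, h1, h2]
      have hμxy : μ x ≠ y := by
        intro h
        exact hxney (hbij.injOn hxC hyC (h.trans hfix.symm))
      have hswapeq : μ₂ = μ ∘ (Equiv.swap x y) := by
        funext v
        rcases eq_or_ne v x with rfl | h1
        · simp [hμ₂x, Equiv.swap_apply_left, hfix]
        rcases eq_or_ne v y with rfl | h2
        · simp [hμ₂y, Equiv.swap_apply_right]
        · simp [hμ₂v v h1 h2, Equiv.swap_apply_of_ne_of_ne h1 h2]
      have hsvC : ∀ v ∈ (C : Set V), (Equiv.swap x y) v ∈ (C : Set V) := by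
        intro v hv
        rcases eq_or_ne v x with rfl | h1
        · simpa [Equiv.swap_apply_left] using hyC
        rcases eq_or_ne v y with rfl | h2
        · simpa [Equiv.swap_apply_right] using hxC
        · simpa [Equiv.swap_apply_of_ne_of_ne h1 h2] using hv
      have hbij₂ : Set.BijOn μ₂ ↑C ↑T := by
        rw [hswapeq]
        refine hbij.comp ⟨hsvC, (Equiv.injective _).injOn, ?_⟩
        intro v hv
        exact ⟨(Equiv.swap x y) v, hsvC v hv, Equiv.swap_apply_self _ _ _⟩
      have hpath₂ : ∀ v ∈ C, Relation.ReflTransGen A v (μ₂ v) := by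
        intro v hv
        rcases eq_or_ne v x with rfl | h1
        · rw [hμ₂x]; exact Relation.ReflTransGen.single hxy
        rcases eq_or_ne v y with rfl | h2
        · rw [hμ₂y]; exact hyt
        · rw [hμ₂v v h1 h2]; exact hpath v hv
      have hΦ : ∑ v ∈ C, G.dist v (μ₂ v) ≤ ∑ v ∈ C, G.dist v (μ v) := by
        have hyC' : y ∈ C.erase x := Finset.mem_erase.mpr ⟨hxney.symm, hyC⟩
        have hsplit : ∀ f : V → ℕ,
            ∑ v ∈ C, f v = f x + (f y + ∑ v ∈ (C.erase x).erase y, f v) := by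
          intro f
          rw [Finset.add_sum_erase _ f hyC', Finset.add_sum_erase _ f hxC]
        rw [hsplit (fun v => G.dist v (μ₂ v)), hsplit (fun v => G.dist v (μ v))]
        have hcong : ∑ v ∈ (C.erase x).erase y, G.dist v (μ₂ v)
            = ∑ v ∈ (C.erase x).erase y, G.dist v (μ v) := by
          refine Finset.sum_congr rfl ?_
          intro v hv
          rw [hμ₂v v (Finset.ne_of_mem_erase (Finset.mem_of_mem_erase hv))
            (Finset.ne_of_mem_erase hv)]
        rw [hcong]
        have h1 : G.dist x (μ₂ x) ≤ 1 := by
          rw [hμ₂x]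
          have := SimpleGraph.dist_le (Walk.cons (horient _ _ hxy) Walk.nil)
          simpa using this
        have h2 : G.dist y (μ₂ y) < G.dist x (μ x) := by
          rw [hμ₂y]; exact dist_lt hG horient hcover hxy hyt
        have h3 : G.dist y (μ y) = 0 := by rw [hfix]; exact SimpleGraph.dist_self
        omega
      obtain ⟨m, μ', hm, hb', hp', hlt⟩ :=
        ih y hxy μ₂ hbij₂ hpath₂ hyC (by rw [hμ₂y]; exact hμxy)
      exact ⟨m, μ', hm, hb', hp', hlt.trans_le hΦ⟩
    · exact ih y hxy μ hbij hpath hyC hfix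
  · -- free: move the token from x to y
    refine ⟨(x, y), fun v => if v = y then μ x else μ v, ⟨hxC, hyC, [], ?_, by simp⟩, ?_, ?_, ?_⟩
    · simpa [List.Chain] using hxy
    · constructor
      · -- MapsTo
        intro v hv
        rcases Finset.mem_insert.mp (by exact_mod_cast hv) with rfl | hv'
        · simpa using hbij.mapsTo hxC
        · have hvC := Finset.mem_of_mem_erase hv'
          have : v ≠ y := fun h => hyC (h ▸ hvC)
          simpa [this] using hbij.mapsTo hvC
      constructor
      · -- InjOn
        intro a ha b hb hab
        have hmem : ∀ c, c ∈ (↑(doMove C (x, y)) : Set V) → c = y ∨ (c ∈ C ∧ c ≠ y ∧ c ≠ x) := by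
          intro c hc
          rcases Finset.mem_insert.mp (by exact_mod_cast hc) with rfl | hc'
          · exact Or.inl rfl
          · exact Or.inr ⟨Finset.mem_of_mem_erase hc',
              fun h => hyC (h ▸ Finset.mem_of_mem_erase hc'), Finset.ne_of_mem_erase hc'⟩
        rcases hmem a ha with rfl | ⟨haC, hay, hax⟩ <;> rcases hmem b hb with rfl | ⟨hbC, hby, hbx⟩
        · rfl
        · simp only [if_pos rfl, if_neg hby] at hab
          exact absurd (hbij.injOn hxC hbC hab) (Ne.symm hbx)
        · simp only [if_pos rfl, if_neg hay] at hab
          exact absurd (hbij.injOn haC hxC hab) hax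
        · simp only [if_neg hay, if_neg hby] at hab
          exact hbij.injOn haC hbC hab
      · -- SurjOn
        intro t ht
        obtain ⟨a, haC, hat⟩ := hbij.surjOn ht
        rcases eq_or_ne a x with rfl | hax
        · refine ⟨y, ?_, by simpa using hat⟩
          exact_mod_cast Finset.mem_insert_self y (C.erase a)
        · have hay : a ≠ y := fun h => hyC (h ▸ haC)
          refine ⟨a, ?_, by simpa [hay] using hat⟩
          exact_mod_cast Finset.mem_insert_of_mem (Finset.mem_erase.mpr ⟨hax, haC⟩)
    · -- paths
      intro v hv
      rcases Finset.mem_insert.mp hv with rfl | hv'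
      · simpa using hyt
      · have hvC := Finset.mem_of_mem_erase hv'
        have : v ≠ y := fun h => hyC (h ▸ hvC)
        simpa [this] using hpath v hvC
    · -- measure decreases
      have hyE : y ∉ C.erase x := fun h => hyC (Finset.mem_of_mem_erase h)
      have hrw : ∑ v ∈ doMove C (x, y), G.dist v (if v = y then μ x else μ v)
          = G.dist y (μ x) + ∑ v ∈ C.erase x, G.dist v (μ v) := by
        show ∑ v ∈ insert y (C.erase x), _ = _
        rw [Finset.sum_insert hyE]
        simp only [if_pos rfl]
        congr 1
        refine Finset.sum_congr rfl ?_
        intro v hv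
        have : v ≠ y := fun h => hyC (h ▸ Finset.mem_of_mem_erase hv)
        rw [if_neg this]
      rw [hrw, ← Finset.add_sum_erase _ _ hxC]
      have := dist_lt hG horient hcover hxy hyt
      omega

lemma gen_transform (hG : G.IsTree) (horient : ∀ a b, A a b → G.Adj a b)
    (hcover : ∀ a b, G.Adj a b → (A a b ∨ A b a) ∧ ¬ (A a b ∧ A b a)) (T : Finset V) :
    ∀ (n : ℕ) (C : Finset V) (μ : V → V), Set.BijOn μ ↑C ↑T →
      (∀ v ∈ C, Relation.ReflTransGen A v (μ v)) →
      ∑ v ∈ C, G.dist v (μ v) ≤ n → ∃ ms, Transforms A C ms T := by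
  intro n
  induction n with
  | zero =>
    intro C μ hbij hpath hsum
    have hid : ∀ v ∈ (C : Set V), μ v = v := by
      intro v hv
      have h0 : G.dist v (μ v) = 0 := by
        have := Finset.sum_eq_zero_iff.mp (Nat.le_zero.mp hsum) v hv
        exact this
      exact (hG.isConnected.dist_eq_zero_iff.mp h0).symm
    have hCT : (C : Set V) = (T : Set V) := by
      rw [← hbij.image_eq]
      rw [Set.image_congr hid]
      exact (Set.image_id' _).symm
    cases Finset.coe_injective hCT
    exact ⟨[], Transforms.nil _⟩
  | succ n ihn =>
    intro C μ hbij hpath hsum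
    by_cases h0 : ∑ v ∈ C, G.dist v (μ v) ≤ n
    · exact ihn C μ hbij hpath h0
    · have hp0 : ∑ v ∈ C, G.dist v (μ v) ≠ 0 := by omega
      obtain ⟨s, hsC, hds⟩ := Finset.exists_ne_zero_of_sum_ne_zero hp0
      have hne : μ s ≠ s := by
        intro h
        rw [h, SimpleGraph.dist_self] at hds
        exact hds rfl
      obtain ⟨m, μ', hm, hb', hp', hlt⟩ :=
        inner_move hG horient hcover C T s μ hbij hpath hsC hne
      obtain ⟨ms, hms⟩ := ihn (doMove C m) μ' hb' hp' (by omega)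
      exact ⟨m :: ms, Transforms.cons hm hms⟩

end Aux

/-- Lemma (directed trees): let `A` be an orientation of a tree `G`, and let
`S`, `T` be configurations of equal size such that every leaf of the tree lies
in `S Δ T`. If there is a bijection `μ : S → T` with `s ≠ μ s` and a directed
path from `s` to `μ s` for every `s ∈ S`, then there is a transforming
sequence from `S` to `T`. -/
theorem directed_tree_transformation {V : Type*} [Fintype V] [DecidableEq V]
    (G : SimpleGraph V) [DecidableRel G.Adj] (hG : G.IsTree)
    (A : V → V → Prop)
    (horient : ∀ a b, A a b → G.Adj a b)
    (hcover : ∀ a b, G.Adj a b → (A a b ∨ A b a) ∧ ¬ (A a b ∧ A b a))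
    (S T : Finset V) (hcard : S.card = T.card)
    (hleaf : ∀ v : V, G.degree v = 1 → v ∈ (S \ T) ∪ (T \ S))
    (μ : V → V) (hbij : Set.BijOn μ ↑S ↑T)
    (hμ : ∀ s ∈ S, s ≠ μ s ∧ Relation.ReflTransGen A s (μ s)) :
    ∃ ms, Transforms A S ms T :=
  gen_transform hG horient hcover T (∑ v ∈ S, G.dist v (μ v)) S μ hbij
    (fun v hv => (hμ v hv).2) le_rfl
end

section
/- Let D be a digraph, S, T ⊆ V(D) with |S| = |T| = k, ℓ a natural number, and v ∈ S ∩ T a vertex such that there is no directed path in D from any vertex of S \ T to v. Then there is a transforming sequence from S to T in D of length at most ℓ if and only if there is a transforming sequence from S \ {v} to T \ {v} in D − v of length at most ℓ. (Assume S ∪ T = V(D), i.e., the instance is contracted.) -/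
section Aux
variable {V : Type*} [DecidableEq V] {A : V → V → Prop} {v : V}

lemma aux_chain_rtg : ∀ (p : List V) (s t : V),
    List.Chain A s (p ++ [t]) → Relation.ReflTransGen A s t
  | [], s, t, h => by
      simp only [List.Chain, List.nil_append, List.chain_cons] at h
      exact Relation.ReflTransGen.single h.1
  | a :: p, s, t, h => by
      rw [List.cons_append, List.Chain, List.chain_cons] at h
      exact Relation.ReflTransGen.head h.1 (aux_chain_rtg p a t h.2)

lemma aux_chain_ne : ∀ (l : List V) (s : V),
    List.Chain (fun a b => a ≠ v ∧ b ≠ v ∧ A a b) s l → ∀ x ∈ l, x ≠ v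
  | [], _, _ => by simp
  | b :: l, s, h => by
      rw [List.Chain, List.chain_cons] at h
      intro x hx
      rcases List.mem_cons.1 hx with rfl | hx
      · exact h.1.2.1
      · exact aux_chain_ne l b h.2 x hx

lemma aux_chain_restrict : ∀ (l : List V) (s : V),
    List.Chain A s l → s ≠ v → (∀ x ∈ l, x ≠ v) →
    List.Chain (fun a b => a ≠ v ∧ b ≠ v ∧ A a b) s l
  | [], _, _, _, _ => List.Chain.nil
  | b :: l, s, h, hs, hl => by
      rw [List.Chain, List.chain_cons] at h ⊢
      refine ⟨⟨hs, hl b (List.mem_cons_self), h.1⟩, ?_⟩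
      exact aux_chain_restrict l b h.2 (hl b (List.mem_cons_self))
        (fun x hx => hl x (List.mem_cons_of_mem _ hx))

variable {R : Finset V} (hR : ∀ u, u ∈ R ↔ Relation.ReflTransGen A u v)

include hR in
lemma aux_card_move {C : Finset V} {m : V × V} (h : ValidMove A C m) :
    (doMove C m ∩ R).card ≤ (C ∩ R).card := by
  obtain ⟨h1, h2, p, hp, hpC⟩ := h
  by_cases hm2 : m.2 ∈ R
  · have hm1 : m.1 ∈ R := by
      rw [hR] at hm2 ⊢
      exact (aux_chain_rtg p m.1 m.2 hp).trans hm2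
    have hm2C : m.2 ∉ C ∩ R := fun h => h2 (Finset.mem_of_mem_inter_left h)
    have : doMove C m ∩ R = insert m.2 ((C ∩ R).erase m.1) := by
      ext x
      simp only [doMove, Finset.mem_inter, Finset.mem_insert, Finset.mem_erase]
      constructor
      · rintro ⟨h | ⟨hne, hC⟩, hr⟩
        · exact Or.inl h
        · exact Or.inr ⟨hne, hC, hr⟩
      · rintro (rfl | ⟨hne, hC, hr⟩)
        · exact ⟨Or.inl rfl, hm2⟩
        · exact ⟨Or.inr ⟨hne, hC⟩, hr⟩
    rw [this, Finset.card_insert_of_notMem (fun h => hm2C (Finset.mem_of_mem_erase h)),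
      Finset.card_erase_of_mem (Finset.mem_inter.2 ⟨h1, hm1⟩)]
    have : 0 < (C ∩ R).card := Finset.card_pos.2 ⟨m.1, Finset.mem_inter.2 ⟨h1, hm1⟩⟩
    omega
  · apply Finset.card_le_card
    intro x hx
    rw [Finset.mem_inter] at hx ⊢
    obtain ⟨hx1, hx2⟩ := hx
    simp only [doMove, Finset.mem_insert, Finset.mem_erase] at hx1
    rcases hx1 with rfl | ⟨_, hC⟩
    · exact absurd hx2 hm2
    · exact ⟨hC, hx2⟩

include hR in
lemma aux_card_transforms {C T : Finset V} {ms : List (V × V)}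
    (h : Transforms A C ms T) : (T ∩ R).card ≤ (C ∩ R).card := by
  induction h with
  | nil => exact le_rfl
  | cons hm _ ih => exact ih.trans (aux_card_move hR hm)

include hR in
lemma aux_erase {C T : Finset V} {ms : List (V × V)}
    (h : Transforms A C ms T) (hRC : R ⊆ C) (hRT : R ⊆ T) (hvR : v ∈ R) :
    Transforms (fun a b => a ≠ v ∧ b ≠ v ∧ A a b) (C.erase v) ms (T.erase v) := by
  induction h with
  | nil => exact Transforms.nil _
  | @cons C T m ms hm ht ih =>
    obtain ⟨h1, h2, p, hp, hpC⟩ := hm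
    have hm2R : m.2 ∉ R := fun h => h2 (hRC h)
    have hm1R : m.1 ∉ R := by
      intro hm1
      have hdo : doMove C m ∩ R = R.erase m.1 := by
        ext x
        simp only [doMove, Finset.mem_inter, Finset.mem_insert, Finset.mem_erase]
        constructor
        · rintro ⟨rfl | ⟨hne, _⟩, hr⟩
          · exact absurd hr hm2R
          · exact ⟨hne, hr⟩
        · rintro ⟨hne, hr⟩
          exact ⟨Or.inr ⟨hne, hRC hr⟩, hr⟩
      have hcard := aux_card_transforms hR ht
      rw [hdo, Finset.card_erase_of_mem hm1, Finset.inter_eq_right.2 hRT] at hcard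
      have : 0 < R.card := Finset.card_pos.2 ⟨v, hvR⟩
      omega
    have hvC : v ∈ C := hRC hvR
    have hm1v : m.1 ≠ v := fun h => hm1R (h ▸ hvR)
    have hm2v : m.2 ≠ v := fun h => h2 (h ▸ hvC)
    have hallne : ∀ x ∈ p ++ [m.2], x ≠ v := by
      intro x hx
      rcases List.mem_append.1 hx with hx | hx
      · exact fun h => hpC x hx (h ▸ hvC)
      · rw [List.mem_singleton.1 hx]; exact hm2v
    have hRdo : R ⊆ doMove C m := by
      intro x hx
      exact Finset.mem_insert_of_mem (Finset.mem_erase.2 ⟨fun h => hm1R (h ▸ hx), hRC hx⟩)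
    have hdoeq : doMove (C.erase v) m = (doMove C m).erase v := by
      ext x
      simp only [doMove, Finset.mem_insert, Finset.mem_erase]
      constructor
      · rintro (rfl | ⟨hne, hnv, hC⟩)
        · exact ⟨hm2v, Or.inl rfl⟩
        · exact ⟨hnv, Or.inr ⟨hne, hC⟩⟩
      · rintro ⟨hnv, rfl | ⟨hne, hC⟩⟩
        · exact Or.inl rfl
        · exact Or.inr ⟨hne, hnv, hC⟩
    refine Transforms.cons ⟨Finset.mem_erase.2 ⟨hm1v, h1⟩,
      fun h => h2 (Finset.mem_of_mem_erase h),
      p, aux_chain_restrict _ _ hp hm1v hallne,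
      fun x hx h => hpC x hx (Finset.mem_of_mem_erase h)⟩ ?_
    rw [hdoeq]
    exact ih hRdo hRT

lemma aux_insert {C T' : Finset V} {ms : List (V × V)}
    (h : Transforms (fun a b => a ≠ v ∧ b ≠ v ∧ A a b) C ms T') (hvC : v ∉ C) :
    Transforms A (insert v C) ms (insert v T') := by
  induction h with
  | nil => exact Transforms.nil _
  | @cons C T' m ms hm ht ih =>
    obtain ⟨h1, h2, p, hp, hpC⟩ := hm
    have hm1v : m.1 ≠ v := by
      cases p with
      | nil => simp only [List.Chain, List.nil_append, List.chain_cons] at hp; exact hp.1.1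
      | cons a q => rw [List.cons_append, List.Chain, List.chain_cons] at hp; exact hp.1.1
    have hallne : ∀ x ∈ p ++ [m.2], x ≠ v := aux_chain_ne _ _ hp
    have hm2v : m.2 ≠ v := hallne m.2 (List.mem_append_right _ (List.mem_singleton_self _))
    have hdoeq : doMove (insert v C) m = insert v (doMove C m) := by
      ext x
      simp only [doMove, Finset.mem_insert, Finset.mem_erase]
      constructor
      · rintro (rfl | ⟨hne, rfl | hC⟩)
        · exact Or.inr (Or.inl rfl)
        · exact Or.inl rfl
        · exact Or.inr (Or.inr ⟨hne, hC⟩)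
      · rintro (rfl | rfl | ⟨hne, hC⟩)
        · exact Or.inr ⟨Ne.symm hm1v, Or.inl rfl⟩
        · exact Or.inl rfl
        · exact Or.inr ⟨hne, Or.inr hC⟩
    have hvdo : v ∉ doMove C m := by
      simp only [doMove, Finset.mem_insert, Finset.mem_erase]
      rintro (h | ⟨_, h⟩)
      · exact hm2v h.symm
      · exact hvC h
    refine Transforms.cons ⟨Finset.mem_insert_of_mem h1, ?_,
      p, List.Chain.imp (fun a b hab => hab.2.2) hp, ?_⟩ ?_
    · intro h
      rcases Finset.mem_insert.1 h with h | h
      · exact hm2v h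
      · exact h2 h
    · intro x hx h
      rcases Finset.mem_insert.1 h with h | h
      · exact hallne x (List.mem_append_left _ hx) h
      · exact hpC x hx h
    · rw [hdoeq]; exact ih hvdo

end Aux

/-- For a contracted instance of unlabelled directed token moving and an
obstacle `v ∈ S ∩ T` with no directed path from any vertex of `S \ T` to `v`,
deleting `v` preserves the existence of a transforming sequence of length at
most `ℓ`. -/
theorem delete_unreachable_obstacle {V : Type*} [DecidableEq V]
    (A : V → V → Prop) (S T : Finset V) (k ℓ : ℕ)
    (hS : S.card = k) (hT : T.card = k)
    (hcontr : (↑S ∪ ↑T : Set V) = Set.univ)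
    (v : V) (hv : v ∈ S ∩ T)
    (hnopath : ∀ u ∈ S \ T, ¬ Relation.ReflTransGen A u v) :
    (∃ ms, Transforms A S ms T ∧ ms.length ≤ ℓ) ↔
    (∃ ms, Transforms (fun a b => a ≠ v ∧ b ≠ v ∧ A a b)
        (S.erase v) ms (T.erase v) ∧ ms.length ≤ ℓ) := by
  have hvS : v ∈ S := (Finset.mem_inter.1 hv).1
  have hvT : v ∈ T := (Finset.mem_inter.1 hv).2
  constructor
  · rintro ⟨ms, h, hl⟩
    classical
    set R : Finset V := T.filter (fun u => Relation.ReflTransGen A u v) with hRdef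
    have hR : ∀ u, u ∈ R ↔ Relation.ReflTransGen A u v := by
      intro u
      simp only [hRdef, Finset.mem_filter, and_iff_right_iff_imp]
      intro hu
      have : u ∈ (↑S ∪ ↑T : Set V) := hcontr ▸ Set.mem_univ u
      rcases this with h' | h'
      · by_contra huT
        exact hnopath u (Finset.mem_sdiff.2 ⟨h', huT⟩) hu
      · exact h'
    have hRT : R ⊆ T := Finset.filter_subset _ _
    have hvR : v ∈ R := (hR v).2 Relation.ReflTransGen.refl
    have hRS : R ⊆ S := by
      have hc := aux_card_transforms hR h
      rw [Finset.inter_eq_right.2 hRT] at hc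
      have := Finset.eq_of_subset_of_card_le (Finset.inter_subset_right : S ∩ R ⊆ R) hc
      rw [← this]
      exact Finset.inter_subset_left
    exact ⟨ms, aux_erase hR h hRS hRT hvR, hl⟩
  · rintro ⟨ms, h, hl⟩
    have := aux_insert (A := A) h (Finset.notMem_erase v S)
    rw [Finset.insert_erase hvS, Finset.insert_erase hvT] at this
    exact ⟨ms, this, hl⟩
end

section
/- Let D be a digraph with S ∪ T = V(D), and v ∈ S ∩ T such that there is no directed path from v to any vertex of T \ S. Then for every ℓ, there is a transforming sequence from S to T of length at most ℓ in D if and only if there is a transforming sequence from S \ {v} to T \ {v} of length at most ℓ in D − v. -/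
private lemma chain_restrict {V : Type*} (A : V → V → Prop) (v : V) :
    ∀ (l : List V) (s : V), List.Chain A s l → s ≠ v → (∀ x ∈ l, x ≠ v) →
      List.Chain (fun a b => a ≠ v ∧ b ≠ v ∧ A a b) s l := by
  intro l
  induction l with
  | nil => intro s _ _ _; exact List.Chain.nil
  | cons x xs ih =>
    intro s h hs hl
    cases h with
    | cons_cons hab htl =>
      exact List.Chain.cons ⟨hs, hl x (by simp), hab⟩
        (ih x htl (hl x (by simp)) (fun y hy => hl y (by simp [hy])))

private lemma chain_closed {V : Type*} (A : V → V → Prop) (R : Set V)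
    (hR : ∀ a b, a ∈ R → A a b → b ∈ R) :
    ∀ (l : List V) (s : V), List.Chain A s l → s ∈ R → ∀ x ∈ l, x ∈ R := by
  intro l
  induction l with
  | nil => intro s _ _ x hx; simp at hx
  | cons y ys ih =>
    intro s h hs x hx
    cases h with
    | cons_cons hab htl =>
      have hy : y ∈ R := hR _ _ hs hab
      rcases List.mem_cons.mp hx with rfl | hx'
      · exact hy
      · exact ih y htl hy x hx'

private lemma chain_unrestrict {V : Type*} (A : V → V → Prop) (v : V) :
    ∀ (l : List V) (s : V), List.Chain (fun a b => a ≠ v ∧ b ≠ v ∧ A a b) s l →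
      List.Chain A s l ∧ (∀ x ∈ l, x ≠ v) ∧ (l ≠ [] → s ≠ v) := by
  intro l
  induction l with
  | nil => intro s _; exact ⟨List.Chain.nil, by simp, by simp⟩
  | cons y ys ih =>
    intro s h
    cases h with
    | cons_cons hab htl =>
      obtain ⟨hc, hmem, _⟩ := ih y htl
      refine ⟨List.Chain.cons hab.2.2 hc, ?_, fun _ => hab.1⟩
      intro x hx
      rcases List.mem_cons.mp hx with rfl | hx'
      · exact hab.2.1
      · exact hmem x hx'

private lemma project_transforms {V : Type*} [DecidableEq V] (A : V → V → Prop) (v : V)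
    (R : Set V) (hR : ∀ a b, a ∈ R → A a b → b ∈ R) (hvR : v ∈ R) :
    ∀ {C T : Finset V} {ms : List (V × V)}, Transforms A C ms T →
      (∀ x, x ∈ R → x ∈ C) →
      Transforms (fun a b => a ≠ v ∧ b ≠ v ∧ A a b) (C.erase v) ms (T.erase v) := by
  intro C T ms h
  induction h with
  | nil C => intro _; exact Transforms.nil _
  | @cons C T m ms hm htl ih =>
    intro hRC
    obtain ⟨hs, ht, p, hchain, hp⟩ := hm
    have hpR : ∀ x ∈ p, x ∉ R := fun x hx hxR => hp x hx (hRC x hxR)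
    have htR : m.2 ∉ R := fun h2 => ht (hRC _ h2)
    have hsR : m.1 ∉ R := by
      intro h1
      exact htR (chain_closed A R hR _ _ hchain h1 m.2 (by simp))
    have hsv : m.1 ≠ v := fun h => hsR (h ▸ hvR)
    have htv : m.2 ≠ v := fun h => htR (h ▸ hvR)
    have hall : ∀ x ∈ p ++ [m.2], x ≠ v := by
      intro x hx
      rcases List.mem_append.mp hx with hx' | hx'
      · exact fun h => hpR x hx' (h ▸ hvR)
      · simp at hx'; exact hx' ▸ htv
    have hvalid : ValidMove (fun a b => a ≠ v ∧ b ≠ v ∧ A a b) (C.erase v) m :=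
      ⟨Finset.mem_erase.mpr ⟨hsv, hs⟩,
       fun hmem => ht (Finset.mem_of_mem_erase hmem),
       p, chain_restrict A v _ _ hchain hsv hall,
       fun x hx hmem => hp x hx (Finset.mem_of_mem_erase hmem)⟩
    have hcomm : doMove (C.erase v) m = (doMove C m).erase v := by
      simp only [doMove]
      rw [Finset.erase_insert_of_ne htv, Finset.erase_right_comm]
    have hinv : ∀ x, x ∈ R → x ∈ doMove C m := by
      intro x hx
      have hxC : x ∈ C := hRC x hx
      have : x ≠ m.1 := fun h => hsR (h ▸ hx)
      exact Finset.mem_insert_of_mem (Finset.mem_erase.mpr ⟨this, hxC⟩)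
    exact Transforms.cons hvalid (hcomm ▸ ih hinv)

private lemma lift_transforms {V : Type*} [DecidableEq V] (A : V → V → Prop) (v : V) :
    ∀ {C T : Finset V} {ms : List (V × V)},
      Transforms (fun a b => a ≠ v ∧ b ≠ v ∧ A a b) C ms T →
      Transforms A (insert v C) ms (insert v T) := by
  intro C T ms h
  induction h with
  | nil C => exact Transforms.nil _
  | @cons C T m ms hm htl ih =>
    obtain ⟨hs, ht, p, hchain, hp⟩ := hm
    obtain ⟨hchain', hmem, hne⟩ := chain_unrestrict A v _ _ hchain
    have hsv : m.1 ≠ v := hne (by simp)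
    have htv : m.2 ≠ v := hmem m.2 (by simp)
    have hvalid : ValidMove A (insert v C) m :=
      ⟨Finset.mem_insert_of_mem hs,
       fun hmem' => by
         rcases Finset.mem_insert.mp hmem' with h' | h'
         · exact htv h'
         · exact ht h',
       p, hchain',
       fun x hx hmem' => by
         rcases Finset.mem_insert.mp hmem' with h' | h'
         · exact hmem x (List.mem_append_left _ hx) h'
         · exact hp x hx h'⟩
    have hcomm : doMove (insert v C) m = insert v (doMove C m) := by
      simp only [doMove]
      rw [Finset.erase_insert_of_ne (Ne.symm hsv), Finset.insert_comm]
    exact Transforms.cons hvalid (hcomm ▸ ih)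

/-- For a contracted instance of unlabelled directed token moving and an
obstacle `v ∈ S ∩ T` with no directed path from `v` to any vertex of `T \ S`,
deleting `v` preserves, for every `ℓ`, the existence of a transforming
sequence of length at most `ℓ`. -/
theorem delete_obstacle_no_path_to_target {V : Type*} [DecidableEq V]
    (A : V → V → Prop) (S T : Finset V) (hcard : S.card = T.card)
    (hcontr : (↑S ∪ ↑T : Set V) = Set.univ)
    (v : V) (hv : v ∈ S ∩ T)
    (hnopath : ∀ w ∈ T \ S, ¬ Relation.ReflTransGen A v w) :
    ∀ ℓ : ℕ,
      ((∃ ms, Transforms A S ms T ∧ ms.length ≤ ℓ) ↔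
       (∃ ms, Transforms (fun a b => a ≠ v ∧ b ≠ v ∧ A a b)
          (S.erase v) ms (T.erase v) ∧ ms.length ≤ ℓ)) := by
  have hvS : v ∈ S := (Finset.mem_inter.mp hv).1
  have hvT : v ∈ T := (Finset.mem_inter.mp hv).2
  intro ℓ
  constructor
  · rintro ⟨ms, h, hlen⟩
    refine ⟨ms, ?_, hlen⟩
    refine project_transforms A v {w | Relation.ReflTransGen A v w}
      (fun a b ha hab => Relation.ReflTransGen.tail ha hab)
      Relation.ReflTransGen.refl h ?_
    intro x hx
    by_contra hxS
    have hxT : x ∈ T := by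
      have hx2 : x ∈ (↑S ∪ ↑T : Set V) := by rw [hcontr]; trivial
      rcases hx2 with h' | h'
      · exact absurd h' hxS
      · exact h'
    exact hnopath x (Finset.mem_sdiff.mpr ⟨hxT, hxS⟩) hx
  · rintro ⟨ms, h, hlen⟩
    refine ⟨ms, ?_, hlen⟩
    have hl := lift_transforms A v h
    rwa [Finset.insert_erase hvS, Finset.insert_erase hvT] at hl
end

section
/- Let α be a transforming sequence from S to T in a graph, with last move m = (s,t), and let α' be α with m removed, transforming S into T' = (T \ {t}) ∪ {s}. Suppose γ is a transforming sequence from S to a configuration U where U = (T' \ {v}) ∪ {u} for some vertices u ∉ T' and v ∈ T' with v ≠ s. If the move m = (s,t) is not valid at configuration U (i.e., every path from s to t is blocked by a token of U), then there exists a path from u to t all of whose intermediate vertices are free of tokens of U. -/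

lemma transforms_append_singleton {V : Type*} [DecidableEq V] {A : V → V → Prop}
    {S T : Finset V} {ms : List (V × V)} {m : V × V}
    (h : Transforms A S (ms ++ [m]) T) :
    ∃ C, Transforms A S ms C ∧ ValidMove A C m ∧ doMove C m = T := by
  induction ms generalizing S with
  | nil =>
    cases h with
    | cons hv h' => cases h'; exact ⟨S, .nil S, hv, rfl⟩
  | cons a ms ih =>
    cases h with
    | cons hv h' =>
      obtain ⟨C, h1, h2, h3⟩ := ih h'
      exact ⟨C, .cons hv h1, h2, h3⟩

lemma chain_split {V : Type*} {A : V → V → Prop} {U : Finset V} {t u : V} :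
    ∀ (p : List V) (s : V), List.Chain A s (p ++ [t]) →
    (∀ w ∈ p, w ∉ U ∨ w = u) →
    FreePath A U s t ∨ FreePath A U u t := by
  intro p
  induction p with
  | nil =>
    intro s hc _
    exact Or.inl ⟨[], hc, by simp⟩
  | cons w p ih =>
    intro s hc hmem
    rw [List.cons_append] at hc; simp only [List.Chain, List.chain_cons] at hc
    rcases ih w hc.2 (fun x hx => hmem x (List.mem_cons_of_mem _ hx)) with h | h
    · rcases hmem w List.mem_cons_self with hw | hw
      · obtain ⟨q, hq, hqU⟩ := h
        refine Or.inl ⟨w :: q, ?_, ?_⟩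
        · rw [List.cons_append]; simp only [List.Chain, List.chain_cons]; exact ⟨hc.1, hq⟩
        · intro x hx
          rcases List.mem_cons.1 hx with rfl | hx
          · exact hw
          · exact hqU x hx
      · subst hw; exact Or.inr h
    · exact Or.inr h

/-- Observation: let `α = ms ++ [(s,t)]` be a transforming sequence from `S`
to `T`, so that `ms` transforms `S` into `T' = (T \ {t}) ∪ {s}`. Suppose `γ`
transforms `S` into `U = (T' \ {v}) ∪ {u}` with `u ∉ T'`, `v ∈ T'`, `v ≠ s`.
If the move `(s,t)` is blocked at `U` (there is no free path from `s` to `t`),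
then there is a free path from `u` to `t` (all intermediate vertices avoid the
tokens of `U`). -/
theorem blocked_move_gives_free_path {V : Type*} [DecidableEq V]
    (G : SimpleGraph V) (S T : Finset V) (ms : List (V × V)) (s t : V)
    (hα : Transforms G.Adj S (ms ++ [(s, t)]) T)
    (T' : Finset V) (hT' : T' = insert s (T.erase t))
    (u v : V) (hu : u ∉ T') (hv : v ∈ T') (hvs : v ≠ s)
    (U : Finset V) (hU : U = insert u (T'.erase v))
    (γ : List (V × V)) (hγ : Transforms G.Adj S γ U)
    (hblocked : ¬ FreePath G.Adj U s t) :
    FreePath G.Adj U u t := by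
  obtain ⟨C, hC, hvalid, hdo⟩ := transforms_append_singleton hα
  obtain ⟨hsC, htC, p, hchain, hpC⟩ := hvalid
  have hCT' : C = T' := by
    subst hT'
    rw [← hdo]
    simp only [doMove]
    rw [Finset.erase_insert (by simp [htC]), Finset.insert_erase hsC]
  rcases chain_split (U := U) p s hchain (fun w hw => by
      by_cases hwu : w = u
      · exact Or.inr hwu
      · refine Or.inl ?_
        rw [hU]
        intro hmem
        rcases Finset.mem_insert.1 hmem with h | h
        · exact hwu h
        · exact hpC w hw (hCT' ▸ Finset.mem_of_mem_erase h)) with h | h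
  · exact absurd h hblocked
  · exact h
end

section
/- Let G be an undirected graph with S ∪ T = V(G), |S| = |T|, and suppose α is a transforming sequence from S to T of minimum length in which no token moves more than once. Then the number of moves in α equals |S \ T| + c, where c is the number of vertices in S ∩ T that are the source of some move in α. In particular, the length of any shortest transforming sequence is at least |S \ T|. -/
/-- A vertex that is never a source stays in the configuration. -/
lemma mem_of_transforms {V : Type*} [DecidableEq V] {A : V → V → Prop}
    {C T : Finset V} {ms : List (V × V)} (h : Transforms A C ms T)
    {v : V} (hv : v ∈ C) (hns : v ∉ ms.map Prod.fst) : v ∈ T := by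
  induction h with
  | nil => exact hv
  | cons hm ht ih =>
    simp only [List.map_cons, List.mem_cons, not_or] at hns
    exact ih (Finset.mem_insert_of_mem (Finset.mem_erase.2 ⟨hns.1, hv⟩)) hns.2

/-- For a contracted instance, a shortest transforming sequence in which no
token moves more than once has length `|S \ T| + c`, where `c` is the number
of vertices of `S ∩ T` that are the source of some move; in particular every
transforming sequence has length at least `|S \ T|`. -/
theorem shortest_length_eq {V : Type*} [DecidableEq V]
    (G : SimpleGraph V) (S T : Finset V)
    (hcard : S.card = T.card) (hcontr : (↑S ∪ ↑T : Set V) = Set.univ)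
    (ms : List (V × V)) (h : Transforms G.Adj S ms T)
    (hmin : ∀ ms', Transforms G.Adj S ms' T → ms.length ≤ ms'.length)
    (honce₁ : ∀ m ∈ ms, m.1 ∈ S) (honce₂ : (ms.map Prod.fst).Nodup) :
    ms.length =
      (S \ T).card + ((S ∩ T).filter (fun w => w ∈ ms.map Prod.fst)).card ∧
    ∀ ms', Transforms G.Adj S ms' T → (S \ T).card ≤ ms'.length := by
  have key : ∀ ms' : List (V × V), Transforms G.Adj S ms' T →
      S \ T ⊆ (ms'.map Prod.fst).toFinset := by
    intro ms' h' v hv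
    rw [Finset.mem_sdiff] at hv
    by_contra hc
    exact hv.2 (mem_of_transforms h' hv.1 (by simpa using hc))
  refine ⟨?_, fun ms' h' => le_trans (Finset.card_le_card (key ms' h'))
    (le_trans (List.toFinset_card_le _) (by simp))⟩
  have hlen : ms.length = (ms.map Prod.fst).toFinset.card := by
    rw [List.toFinset_card_of_nodup honce₂, List.length_map]
  have hFeq : (ms.map Prod.fst).toFinset =
      (S \ T) ∪ ((S ∩ T).filter (fun w => w ∈ ms.map Prod.fst)) := by
    ext v
    simp only [List.mem_toFinset, Finset.mem_union, Finset.mem_filter,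
      Finset.mem_sdiff, Finset.mem_inter]
    constructor
    · intro hv
      have hvS : v ∈ S := by
        obtain ⟨m, hm, rfl⟩ := List.mem_map.1 hv
        exact honce₁ m hm
      by_cases hvT : v ∈ T
      · exact Or.inr ⟨⟨hvS, hvT⟩, hv⟩
      · exact Or.inl ⟨hvS, hvT⟩
    · rintro (hv | hv)
      · simpa using key ms h (Finset.mem_sdiff.2 hv)
      · exact hv.2
  rw [hlen, hFeq, Finset.card_union_of_disjoint]
  exact Finset.disjoint_left.2 fun v hv hv' =>
    (Finset.mem_sdiff.1 hv).2 ((Finset.mem_inter.1 (Finset.mem_filter.1 hv').1).2)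
end
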